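/- For all reals y, y' with 0 < y ≤ y' < 1, the Kullback–Leibler divergence between Bernoulli distributions satisfies KL(Ber(y)‖Ber(y')) = y·log(y/y') + (1−y)·log((1−y)/(1−y')) ≥ (y'−y)²/(2y'). -/

import Mathlib

lemma log_le_half_sub_inv {x : ℝ} (hx : 1 ≤ x) : Real.log x ≤ (x - x⁻¹) / 2 := by
  have hx0 : 0 < x := lt_of_lt_of_le one_pos hx
  set u : ℝ := (x - x⁻¹) / 2 with hu_def
  have hinv : x⁻¹ ≤ 1 := inv_le_one_of_one_le₀ hx
  have hu : 0 ≤ u := by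
    have : x⁻¹ ≤ x := hinv.trans hx
    simp [hu_def]; linarith
  rw [← Real.log_exp u]
  apply Real.log_le_log hx0
  have hsum := Real.sum_le_exp_of_nonneg hu 4
  have hsum' : 1 + u + u ^ 2 / 2 + u ^ 3 / 6 ≤ Real.exp u := by
    calc 1 + u + u ^ 2 / 2 + u ^ 3 / 6
        = ∑ i ∈ Finset.range 4, u ^ i / (Nat.factorial i) := by
          norm_num [Finset.sum_range_succ, Nat.factorial]
      _ ≤ Real.exp u := hsum
  have hxinv : x * x⁻¹ = 1 := mul_inv_cancel₀ (ne_of_gt hx0)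
  have key : x ≤ 1 + u + u ^ 2 / 2 + u ^ 3 / 6 := by
    have h1 : (x - 1) ^ 3 * (x ^ 3 + 9 * x ^ 2 - 3 * x + 1) ≥ 0 := by
      apply mul_nonneg (pow_nonneg (by linarith) 3)
      nlinarith [sq_nonneg x, sq_nonneg (x - 1)]
    have hu_eq : u = (x ^ 2 - 1) / (2 * x) := by
      rw [hu_def]
      field_simp
    rw [hu_eq]
    have hx3 : 0 < x ^ 3 := pow_pos hx0 3
    rw [div_pow, div_pow, ← sub_nonneg]
    have expand : 1 + (x ^ 2 - 1) / (2 * x) + (x ^ 2 - 1) ^ 2 / (2 * x) ^ 2 / 2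
        + (x ^ 2 - 1) ^ 3 / (2 * x) ^ 3 / 6 - x
        = (x - 1) ^ 3 * (x ^ 3 + 9 * x ^ 2 - 3 * x + 1) / (48 * x ^ 3) := by
      field_simp
      ring
    rw [expand]
    positivity
  linarith

/-- For `0 < y ≤ y' < 1`, the Bernoulli KL divergence satisfies
`KL(Ber(y)‖Ber(y')) ≥ (y'−y)²/(2y')`. -/
theorem bernoulli_kl_ge_sq_div (y y' : ℝ) (hy0 : 0 < y) (hyy' : y ≤ y') (hy'1 : y' < 1) :
    (y' - y) ^ 2 / (2 * y') ≤
      y * Real.log (y / y') + (1 - y) * Real.log ((1 - y) / (1 - y')) := by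
  have hy'0 : 0 < y' := lt_of_lt_of_le hy0 hyy'
  have hy1 : y < 1 := lt_of_le_of_lt hyy' hy'1
  have hA : 1 ≤ y' / y := (one_le_div hy0).mpr hyy'
  have h1 : Real.log (y' / y) ≤ (y' / y - y / y') / 2 := by
    have := log_le_half_sub_inv hA
    rwa [inv_div] at this
  have h2 : 1 - (1 - y') / (1 - y) ≤ Real.log ((1 - y) / (1 - y')) := by
    have := Real.one_sub_inv_le_log_of_pos
      (div_pos (by linarith : (0:ℝ) < 1 - y) (by linarith : (0:ℝ) < 1 - y'))
    rwa [inv_div] at this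
  have hlog : Real.log (y / y') = - Real.log (y' / y) := by
    rw [← Real.log_inv, inv_div]
  rw [hlog]
  have e1 : y * (y' / y - y / y') / 2 = (y' ^ 2 - y ^ 2) / (2 * y') := by
    field_simp
  have h1y : (1:ℝ) - y ≠ 0 := by linarith
  have e2 : (1 - y) * (1 - (1 - y') / (1 - y)) = y' - y := by
    field_simp
    ring
  have key : (y' - y) ^ 2 / (2 * y') = -((y' ^ 2 - y ^ 2) / (2 * y')) + (y' - y) := by
    field_simp
    ring
  have t1 : -((y' ^ 2 - y ^ 2) / (2 * y')) ≤ y * (- Real.log (y' / y)) := by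
    rw [← e1]
    have := mul_le_mul_of_nonneg_left h1 hy0.le
    linarith
  have t2 : y' - y ≤ (1 - y) * Real.log ((1 - y) / (1 - y')) := by
    rw [← e2]
    exact mul_le_mul_of_nonneg_left h2 (by linarith)
  linarith [key, t1, t2]
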